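/- arXiv:1906.07976 — 5 statements merged into one kernel-verified Lean document; each statement's English description precedes it below -/
import Mathlib

section
/- Let A be an abelian category, G : FinSet* → A a functor, and n ≥ 0 an integer. The following conditions are equivalent: (i) for every finite set I with |I| > n, G({*} ⊔ I) = Σ_{i ∈ I} Im(G(φ_{I∖{i},I})); (ii) for every I with |I| > n, ∩_{i ∈ I} ker(G(ψ_{I∖{i},I})) = 0; (iii) the functor Prim(G) sends I to 0 for all |I| > n. -/
open CategoryTheory Limits

universe v u

/-- Skeleton of the category `FinSet*` of pointed finite sets: the object `⟨m⟩`
represents `{*} ⊔ Fin m`, and morphisms are pointed maps, encoded as partially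
defined maps (`none` = basepoint). -/
structure PtdFin : Type where
  n : ℕ

instance : Category.{0} PtdFin where
  Hom X Y := Fin X.n → Option (Fin Y.n)
  id X := some
  comp f g := fun i => (f i).bind g
  id_comp f := rfl
  comp_id f := by
    funext i; show (f i).bind some = f i; cases f i <;> rfl
  assoc f g h := by
    funext i
    show ((f i).bind g).bind h = (f i).bind fun j => (g j).bind h
    cases f i <;> rfl

/-- The pointed map `ψ_{I∖{i},I} : {*} ⊔ I → {*} ⊔ (I∖{i})`, the identity away
from `i` and collapsing `i` to the basepoint. -/
def psiDel {m : ℕ} (i : Fin (m + 1)) : (⟨m + 1⟩ : PtdFin) ⟶ ⟨m⟩ :=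
  ⇑(finSuccEquiv' i)

/-- The pointed map `φ_{I∖{i},I} : {*} ⊔ (I∖{i}) → {*} ⊔ I` induced by the
inclusion `I∖{i} ↪ I`. -/
def phiIns {m : ℕ} (i : Fin (m + 1)) : (⟨m⟩ : PtdFin) ⟶ ⟨m + 1⟩ :=
  fun j => some (i.succAbove j)

/-- The pointed map `ψ_{S,I} : {*} ⊔ I → {*} ⊔ S` for a subset `S ⊆ I`: the
identity on `S` and collapsing `I ∖ S` to the basepoint (here `S` is identified
with `Fin S.card` via the order isomorphism). -/
def psiSub {m : ℕ} (S : Finset (Fin m)) : (⟨m⟩ : PtdFin) ⟶ ⟨S.card⟩ :=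
  fun j => if h : j ∈ S then some ((S.orderIsoOfFin rfl).symm ⟨j, h⟩) else none

/-- `Prim(G)(I) = ∩_{S ⊊ I} ker G(ψ_{S,I})`, as a subobject of `G({*} ⊔ I)`. -/
noncomputable def primSubobject {A : Type u} [Category.{v} A] [Abelian A]
    (G : PtdFin ⥤ A) (m : ℕ) : Subobject (G.obj ⟨m⟩) :=
  (Finset.univ.filter fun S : Finset (Fin m) => S ≠ Finset.univ).inf
    fun S => kernelSubobject (G.map (psiSub S))


section Aux

/-! ### Combinatorial lemmas in `PtdFin` -/

theorem phiIns_psiDel {m : ℕ} (i : Fin (m + 1)) :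
    phiIns i ≫ psiDel i = 𝟙 (⟨m⟩ : PtdFin) := by
  funext j
  show (psiDel i) (i.succAbove j) = some j
  simp [psiDel, finSuccEquiv'_succAbove]

/-- The idempotent `π_i = ψ_i ≫ φ_i` collapsing `i` to the basepoint. -/
def piDel {m : ℕ} (i : Fin (m + 1)) : (⟨m + 1⟩ : PtdFin) ⟶ ⟨m + 1⟩ :=
  psiDel i ≫ phiIns i

theorem piDel_apply {m : ℕ} (i j : Fin (m + 1)) :
    piDel i j = if j = i then none else some j := by
  show ((psiDel i) j).bind (phiIns i) = _
  split_ifs with h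
  · subst h
    rw [show (psiDel j) j = none from finSuccEquiv'_at j]
    rfl
  · obtain ⟨k, hk⟩ := Fin.exists_succAbove_eq h
    rw [show (psiDel i) j = some k from by rw [← hk]; exact finSuccEquiv'_succAbove i k]
    show some (i.succAbove k) = some j
    rw [hk]

theorem piDel_comm {m : ℕ} (i j : Fin (m + 1)) :
    piDel i ≫ piDel j = piDel j ≫ piDel i := by
  funext k
  show ((piDel i) k).bind (piDel j) = ((piDel j) k).bind (piDel i)
  rw [piDel_apply, piDel_apply]
  split_ifs <;> simp [piDel_apply, *]

theorem piDel_idem {m : ℕ} (i : Fin (m + 1)) :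
    piDel i ≫ piDel i = piDel i := by
  funext k
  show ((piDel i) k).bind (piDel i) = piDel i k
  rw [piDel_apply]
  split_ifs <;> simp [piDel_apply, *]

/-- Auxiliary map realizing `ψ_i` through `ψ_{univ.erase i}`. -/
def eraseToDel {m : ℕ} (i : Fin (m + 1)) :
    (⟨(Finset.univ.erase i).card⟩ : PtdFin) ⟶ ⟨m⟩ :=
  fun k => finSuccEquiv' i (((Finset.univ.erase i).orderIsoOfFin rfl) k)

theorem psiDel_fac {m : ℕ} (i : Fin (m + 1)) :
    psiDel i = psiSub (Finset.univ.erase i) ≫ eraseToDel i := by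
  funext j
  show (psiDel i) j = ((psiSub (Finset.univ.erase i)) j).bind (eraseToDel i)
  by_cases h : j = i
  · subst h
    rw [show psiSub (Finset.univ.erase j) j = none from dif_neg (by simp)]
    exact finSuccEquiv'_at j
  · have hj : j ∈ Finset.univ.erase i := Finset.mem_erase.2 ⟨h, Finset.mem_univ j⟩
    rw [show psiSub (Finset.univ.erase i) j =
        some (((Finset.univ.erase i).orderIsoOfFin rfl).symm ⟨j, hj⟩) from dif_pos hj]
    show (finSuccEquiv' i) j = (finSuccEquiv' i) _
    congr 1
    rw [OrderIso.apply_symm_apply]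

/-- Auxiliary map realizing `ψ_S` through `ψ_i` when `i ∉ S`. -/
def delToSub {m : ℕ} (S : Finset (Fin (m + 1))) (i : Fin (m + 1)) :
    (⟨m⟩ : PtdFin) ⟶ ⟨S.card⟩ :=
  fun k => if h : i.succAbove k ∈ S then
    some ((S.orderIsoOfFin rfl).symm ⟨i.succAbove k, h⟩) else none

theorem psiSub_fac {m : ℕ} {S : Finset (Fin (m + 1))} {i : Fin (m + 1)} (hi : i ∉ S) :
    psiSub S = psiDel i ≫ delToSub S i := by
  funext j
  show psiSub S j = ((psiDel i) j).bind (delToSub S i)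
  by_cases h : j = i
  · subst h
    rw [show (psiDel j) j = none from finSuccEquiv'_at j]
    exact dif_neg hi
  · obtain ⟨k, hk⟩ := Fin.exists_succAbove_eq h
    rw [show (psiDel i) j = some k from by rw [← hk]; exact finSuccEquiv'_succAbove i k]
    show psiSub S j = delToSub S i k
    unfold psiSub delToSub
    simp only [hk]

/-! ### Abelian category lemmas -/

variable {A : Type u} [Category.{v} A] [Abelian A] (G : PtdFin ⥤ A) (m : ℕ)

/-- The idempotent endomorphism `G(π_i)` in the endomorphism ring. -/
def eEnd (i : Fin (m + 1)) : CategoryTheory.End (G.obj (⟨m + 1⟩ : PtdFin)) :=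
  G.map (piDel i)

theorem eEnd_idem (i : Fin (m + 1)) : eEnd G m i * eEnd G m i = eEnd G m i := by
  show G.map (piDel i) ≫ G.map (piDel i) = G.map (piDel i)
  rw [← G.map_comp, piDel_idem]

theorem eEnd_comm (i j : Fin (m + 1)) : Commute (eEnd G m i) (eEnd G m j) := by
  show eEnd G m i * eEnd G m j = eEnd G m j * eEnd G m i
  show G.map (piDel j) ≫ G.map (piDel i) = G.map (piDel i) ≫ G.map (piDel j)
  rw [← G.map_comp, ← G.map_comp, piDel_comm]

/-- The complementary idempotent `1 - G(π_i)`. -/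
def qEnd (i : Fin (m + 1)) : CategoryTheory.End (G.obj (⟨m + 1⟩ : PtdFin)) :=
  1 - eEnd G m i

theorem qEnd_comm (i j : Fin (m + 1)) : Commute (qEnd G m i) (qEnd G m j) :=
  (Commute.one_right _).sub_right ((Commute.one_left _).sub_left (eEnd_comm G m i j))

/-- The product of the complementary idempotents. -/
noncomputable def QEnd : CategoryTheory.End (G.obj (⟨m + 1⟩ : PtdFin)) :=
  Finset.univ.noncommProd (qEnd G m) (fun a _ b _ _ => qEnd_comm G m a b)

theorem qEnd_mul_eEnd (i : Fin (m + 1)) : qEnd G m i * eEnd G m i = 0 := by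
  unfold qEnd
  rw [sub_mul, one_mul, eEnd_idem, sub_self]

theorem eEnd_mul_qEnd (i : Fin (m + 1)) : eEnd G m i * qEnd G m i = 0 := by
  unfold qEnd
  rw [mul_sub, mul_one, eEnd_idem, sub_self]

theorem QEnd_mul_eEnd (i : Fin (m + 1)) : QEnd G m * eEnd G m i = 0 := by
  unfold QEnd
  rw [← Finset.noncommProd_erase_mul Finset.univ (Finset.mem_univ i) (qEnd G m)
    (fun a _ b _ _ => qEnd_comm G m a b), mul_assoc, qEnd_mul_eEnd, mul_zero]

theorem eEnd_mul_QEnd (i : Fin (m + 1)) : eEnd G m i * QEnd G m = 0 := by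
  unfold QEnd
  rw [← Finset.mul_noncommProd_erase Finset.univ (Finset.mem_univ i) (qEnd G m)
    (fun a _ b _ _ => qEnd_comm G m a b), ← mul_assoc, eEnd_mul_qEnd, zero_mul]

theorem comp_noncommProd_eq {Y : A} (x : Y ⟶ G.obj (⟨m + 1⟩ : PtdFin))
    (s : Finset (Fin (m + 1))) (h : ∀ i ∈ s, x ≫ (qEnd G m i : _ ⟶ _) = x) :
    ∀ comm, x ≫ (s.noncommProd (qEnd G m) comm :
      CategoryTheory.End (G.obj (⟨m + 1⟩ : PtdFin))) = x := by
  classical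
  induction s using Finset.induction_on with
  | empty =>
    intro comm
    rw [Finset.noncommProd_empty]
    exact Category.comp_id x
  | @insert a s ha ih =>
    intro comm
    rw [Finset.noncommProd_insert_of_notMem _ _ _ _ ha, CategoryTheory.End.mul_def,
      ← Category.assoc, ih (fun i hi => h i (Finset.mem_insert_of_mem hi)) _,
      h a (Finset.mem_insert_self a s)]

theorem inf_eq_bot_iff :
    (Finset.univ.inf fun i : Fin (m + 1) =>
      kernelSubobject (G.map (psiDel i))) = ⊥ ↔ QEnd G m = 0 := by
  constructor
  · intro h
    have hf : ∀ i : Fin (m + 1),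
        (kernelSubobject (G.map (psiDel i))).Factors (QEnd G m : _ ⟶ _) := by
      intro i
      apply kernelSubobject_factors
      haveI : IsSplitMono (G.map (phiIns i)) :=
        IsSplitMono.mk' ⟨G.map (psiDel i), by rw [← G.map_comp, phiIns_psiDel, G.map_id]⟩
      apply zero_of_comp_mono (G.map (phiIns i))
      have h1 : (QEnd G m : _ ⟶ _) ≫ G.map (psiDel i ≫ phiIns i) = 0 := eEnd_mul_QEnd G m i
      rw [G.map_comp] at h1
      rw [Category.assoc]
      exact h1
    have hq : ((Finset.univ.inf fun i : Fin (m + 1) =>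
        kernelSubobject (G.map (psiDel i)))).Factors (QEnd G m : _ ⟶ _) :=
      (Subobject.finset_inf_factors _).2 fun i _ => hf i
    rw [h] at hq
    exact (Subobject.bot_factors_iff_zero _).1 hq
  · intro hQ
    rw [← le_bot_iff]
    set K := Finset.univ.inf fun i : Fin (m + 1) =>
      kernelSubobject (G.map (psiDel i)) with hK
    have harr : ∀ i : Fin (m + 1), K.arrow ≫ G.map (psiDel i) = 0 := by
      intro i
      have hfac : (kernelSubobject (G.map (psiDel i))).Factors K.arrow :=
        (Subobject.finset_inf_factors K.arrow).1 (Subobject.factors_self K) i (Finset.mem_univ i)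
      rw [← Subobject.factorThru_arrow _ _ hfac, Category.assoc,
        kernelSubobject_arrow_comp, comp_zero]
    have hq : ∀ i ∈ (Finset.univ : Finset (Fin (m + 1))),
        K.arrow ≫ (qEnd G m i : _ ⟶ _) = K.arrow := by
      intro i _
      show K.arrow ≫ ((1 : CategoryTheory.End _) - eEnd G m i) = K.arrow
      rw [Preadditive.comp_sub]
      have he : K.arrow ≫ (eEnd G m i : _ ⟶ _) = 0 := by
        show K.arrow ≫ G.map (psiDel i ≫ phiIns i) = 0
        rw [G.map_comp, ← Category.assoc, harr i, zero_comp]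
      rw [he, sub_zero]
      exact Category.comp_id K.arrow
    have key : K.arrow ≫ (QEnd G m : _ ⟶ _) = K.arrow :=
      comp_noncommProd_eq G m K.arrow Finset.univ hq _
    rw [hQ] at key
    have hzero : K.arrow = 0 := by rw [← key]; exact comp_zero
    exact Subobject.le_of_comm 0 (by rw [zero_comp, hzero])

theorem sup_eq_top_iff :
    (Finset.univ.sup fun i : Fin (m + 1) =>
      imageSubobject (G.map (phiIns i))) = ⊤ ↔ QEnd G m = 0 := by
  constructor
  · intro h
    have him : ∀ i : Fin (m + 1),
        imageSubobject (G.map (phiIns i)) ≤ kernelSubobject (QEnd G m : _ ⟶ _) := by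
      intro i
      apply le_kernelSubobject
      apply zero_of_epi_comp (factorThruImageSubobject (G.map (phiIns i)))
      rw [← Category.assoc, imageSubobject_arrow_comp]
      have h1 : G.map (psiDel i ≫ phiIns i) ≫ (QEnd G m : _ ⟶ _) = 0 := QEnd_mul_eEnd G m i
      have h2 : G.map (phiIns i) ≫ G.map (psiDel i ≫ phiIns i) = G.map (phiIns i) := by
        rw [← G.map_comp, ← Category.assoc, phiIns_psiDel, Category.id_comp]
      rw [← h2, Category.assoc, h1, comp_zero]
    have hsup : (⊤ : Subobject (G.obj (⟨m + 1⟩ : PtdFin))) ≤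
        kernelSubobject (QEnd G m : _ ⟶ _) := by
      rw [← h]; exact Finset.sup_le fun i _ => him i
    have htop : kernelSubobject (QEnd G m : _ ⟶ _) = ⊤ := le_antisymm le_top hsup
    have h0 := kernelSubobject_arrow_comp (QEnd G m : _ ⟶ _)
    rw [htop] at h0
    exact zero_of_epi_comp _ h0
  · intro hQ
    have key : ∀ s : Finset (Fin (m + 1)),
        ∀ comm, (Finset.univ.sup fun i : Fin (m + 1) =>
          imageSubobject (G.map (phiIns i))).Factors
          ((1 : CategoryTheory.End (G.obj (⟨m + 1⟩ : PtdFin))) -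
            s.noncommProd (qEnd G m) comm) := by
      intro s
      induction s using Finset.induction_on with
      | empty =>
        intro comm
        rw [Finset.noncommProd_empty, sub_self]
        exact Subobject.factors_zero
      | @insert a s ha ih =>
        intro comm
        rw [Finset.noncommProd_insert_of_notMem _ _ _ _ ha]
        have expand : (1 : CategoryTheory.End (G.obj (⟨m + 1⟩ : PtdFin))) -
            qEnd G m a * s.noncommProd (qEnd G m)
              (fun i hi j hj hij => comm (Finset.mem_insert_of_mem hi)
                (Finset.mem_insert_of_mem hj) hij) =
            ((1 : CategoryTheory.End (G.obj (⟨m + 1⟩ : PtdFin))) -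
              s.noncommProd (qEnd G m) (fun i hi j hj hij =>
                comm (Finset.mem_insert_of_mem hi) (Finset.mem_insert_of_mem hj) hij)) +
            eEnd G m a * s.noncommProd (qEnd G m) (fun i hi j hj hij =>
              comm (Finset.mem_insert_of_mem hi) (Finset.mem_insert_of_mem hj) hij) := by
          unfold qEnd
          noncomm_ring
        rw [expand]
        apply Subobject.factors_add
        · exact ih _
        · apply Subobject.factors_of_le _ (Finset.le_sup (Finset.mem_univ a))
          have heq : ∀ P : CategoryTheory.End (G.obj (⟨m + 1⟩ : PtdFin)),
              eEnd G m a * P = ((P : _ ⟶ _) ≫ G.map (psiDel a)) ≫ G.map (phiIns a) := by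
            intro P
            show (P : _ ⟶ _) ≫ G.map (psiDel a ≫ phiIns a) = _
            rw [G.map_comp, Category.assoc]
          rw [heq]
          exact imageSubobject_factors_comp_self _ _
    have hfac := key Finset.univ (fun a _ b _ _ => qEnd_comm G m a b)
    rw [show Finset.univ.noncommProd (qEnd G m) (fun a _ b _ _ => qEnd_comm G m a b) =
      QEnd G m from rfl, hQ, sub_zero] at hfac
    set S := Finset.univ.sup fun i : Fin (m + 1) =>
      imageSubobject (G.map (phiIns i)) with hS
    haveI : IsSplitEpi S.arrow :=
      IsSplitEpi.mk' ⟨S.factorThru _ hfac, Subobject.factorThru_arrow _ _ _⟩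
    haveI := isIso_of_mono_of_isSplitEpi S.arrow
    exact Subobject.eq_top_of_isIso_arrow S

theorem prim_eq_inf : primSubobject G (m + 1) =
    (Finset.univ.inf fun i : Fin (m + 1) => kernelSubobject (G.map (psiDel i))) := by
  apply le_antisymm
  · apply Finset.le_inf
    intro i _
    have hmem : (Finset.univ.erase i) ∈
        Finset.univ.filter (fun S : Finset (Fin (m + 1)) => S ≠ Finset.univ) := by
      rw [Finset.mem_filter]
      refine ⟨Finset.mem_univ _, fun hEq => ?_⟩
      have := Finset.notMem_erase i (Finset.univ : Finset (Fin (m + 1)))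
      rw [hEq] at this
      exact this (Finset.mem_univ i)
    refine le_trans (Finset.inf_le hmem) ?_
    apply le_kernelSubobject
    rw [psiDel_fac i, G.map_comp, ← Category.assoc, kernelSubobject_arrow_comp, zero_comp]
  · apply Finset.le_inf
    intro S hS
    rw [Finset.mem_filter] at hS
    obtain ⟨i, hi⟩ : ∃ i, i ∉ S := by
      by_contra hc
      push_neg at hc
      exact hS.2 (Finset.eq_univ_iff_forall.2 hc)
    refine le_trans (Finset.inf_le (Finset.mem_univ i)) ?_
    apply le_kernelSubobject
    rw [psiSub_fac hi, G.map_comp, ← Category.assoc, kernelSubobject_arrow_comp, zero_comp]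

end Aux

/-- For a functor `G : FinSet* → A` to an abelian category and `n ≥ 0`, the following
are equivalent: (i) for `|I| > n`, `G({*} ⊔ I)` is the sum of the images of the
`G(φ_{I∖{i},I})`; (ii) for `|I| > n`, the intersection of the kernels of the
`G(ψ_{I∖{i},I})` is zero; (iii) `Prim(G)(I) = 0` for `|I| > n`. -/
theorem polynomial_functor_tfae {A : Type u} [Category.{v} A] [Abelian A]
    (G : PtdFin ⥤ A) (n : ℕ) :
    ((∀ m : ℕ, n < m + 1 →
        (Finset.univ.sup fun i : Fin (m + 1) =>
          imageSubobject (G.map (phiIns i))) = ⊤) ↔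
      (∀ m : ℕ, n < m + 1 →
        (Finset.univ.inf fun i : Fin (m + 1) =>
          kernelSubobject (G.map (psiDel i))) = ⊥)) ∧
    ((∀ m : ℕ, n < m + 1 →
        (Finset.univ.inf fun i : Fin (m + 1) =>
          kernelSubobject (G.map (psiDel i))) = ⊥) ↔
      (∀ m : ℕ, n < m + 1 → primSubobject G (m + 1) = ⊥)) := by
  constructor
  · constructor
    · intro h m hm
      exact (inf_eq_bot_iff G m).2 ((sup_eq_top_iff G m).1 (h m hm))
    · intro h m hm
      exact (sup_eq_top_iff G m).2 ((inf_eq_bot_iff G m).1 (h m hm))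
  · constructor
    · intro h m hm
      rw [prim_eq_inf]
      exact h m hm
    · intro h m hm
      rw [← prim_eq_inf] at *
      exact h m hm
end

section
/- Let (A, m) be a Noetherian local ring and let p ⊂ A[x] be a prime ideal lying over m that is not equal to m·A[x] (i.e., not the generic point of the fiber over m). Then p is not an associated prime of A[x]. -/
open Polynomial

/-- For a Noetherian local ring `(A, m)`, a prime of `A[x]` lying over `m` which is not
the generic point of the fiber over `m` (i.e. not equal to `m·A[x]`) is not an
associated prime of `A[x]`. -/
theorem not_isAssociatedPrime_of_lying_over_not_generic
    {A : Type*} [CommRing A] [IsNoetherianRing A] [IsLocalRing A]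
    (p : Ideal (Polynomial A)) (hp : p.IsPrime)
    (hover : p.comap (Polynomial.C : A →+* Polynomial A) = IsLocalRing.maximalIdeal A)
    (hne : p ≠ Ideal.map (Polynomial.C : A →+* Polynomial A) (IsLocalRing.maximalIdeal A)) :
    ¬ IsAssociatedPrime p (Polynomial A) := by
  set m := IsLocalRing.maximalIdeal A
  letI : Field (A ⧸ m) := Ideal.Quotient.field m
  set φ : A →+* A ⧸ m := Ideal.Quotient.mk m
  set Φ : Polynomial A →+* Polynomial (A ⧸ m) := Polynomial.mapRingHom φ
  have hker : RingHom.ker Φ = Ideal.map (Polynomial.C : A →+* Polynomial A) m := by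
    rw [Polynomial.ker_mapRingHom]
    congr 1
    exact Ideal.mk_ker
  have hsub : Ideal.map (Polynomial.C : A →+* Polynomial A) m ≤ p :=
    Ideal.map_le_iff_le_comap.mpr (le_of_eq hover.symm)
  have hkerp : RingHom.ker Φ ≤ p := hker ▸ hsub
  have hΦsurj : Function.Surjective Φ :=
    Polynomial.map_surjective φ Ideal.Quotient.mk_surjective
  have hcomap : Ideal.comap Φ (Ideal.map Φ p) = p := by
    rw [Ideal.comap_map_of_surjective Φ hΦsurj, ← RingHom.ker_eq_comap_bot,
      sup_eq_left.mpr hkerp]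
  -- the image of p is a nonzero ideal of (A/m)[X]
  have himage_ne : Ideal.map Φ p ≠ ⊥ := by
    intro h
    apply hne
    apply le_antisymm _ hsub
    intro x hx
    have : x ∈ RingHom.ker Φ := by
      rw [RingHom.mem_ker]
      have : Φ x ∈ Ideal.map Φ p := Ideal.mem_map_of_mem Φ hx
      rwa [h, Ideal.mem_bot] at this
    exact hker ▸ this
  obtain ⟨g0, hg0mem, hg0ne⟩ := Submodule.exists_mem_ne_zero_of_ne_bot himage_ne
  -- make it monic
  set g : Polynomial (A ⧸ m) := g0 * Polynomial.C (g0.leadingCoeff)⁻¹ with hg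
  have hgmem : g ∈ Ideal.map Φ p := Ideal.mul_mem_right _ _ hg0mem
  have hgmonic : g.Monic := Polynomial.monic_mul_leadingCoeff_inv hg0ne
  -- lift to a monic polynomial in p
  have hlifts : g ∈ Polynomial.lifts φ := by
    rw [Polynomial.mem_lifts]
    exact hΦsurj g
  obtain ⟨F, hF1, _, hFmonic⟩ := Polynomial.lifts_and_degree_eq_and_monic hlifts hgmonic
  have hFp : F ∈ p := by
    rw [← hcomap, Ideal.mem_comap]
    show Polynomial.map φ F ∈ _
    rw [hF1]
    exact hgmem
  -- conclude
  rintro ⟨_, x, hx⟩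
  have hx0 : x ≠ 0 := by
    intro h
    subst h
    rw [Submodule.bot_colon', Submodule.span_zero_singleton, Submodule.annihilator_bot,
      Ideal.radical_top] at hx
    exact hp.ne_top hx
  have : F • x = 0 := by
    have := hx ▸ hFp
    obtain ⟨n, hn⟩ := this
    rw [Submodule.mem_colon_singleton, Submodule.mem_bot] at hn
    exact absurd ((hFmonic.pow n).isRegular.left
      (by simpa [smul_eq_mul] using hn.trans (mul_zero (F ^ n)).symm)) hx0
  exact hx0 (hFmonic.isRegular.left (by simpa [smul_eq_mul] using this.trans (mul_zero F).symm))
end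

section
/- Let A be a Noetherian commutative ring, f ∈ A, and let Â be the f-adic completion of A. Let M be an A-module that is set-theoretically supported on the vanishing locus of f (every element of M is annihilated by a power of f). Then the natural map M → Â ⊗_A M is an isomorphism. -/
open AdicCompletion
open scoped TensorProduct
set_option maxHeartbeats 1000000

/-- The submodule `(span {f})^n • ⊤` of `A` equals the ideal `span {f^n}`. -/
theorem bl_smul_top_eq {A : Type*} [CommRing A] (f : A) (n : ℕ) :
    ((Ideal.span {f}) ^ n • (⊤ : Submodule A A)) = Ideal.span {f ^ n} := by
  rw [smul_eq_mul, Ideal.mul_top, Ideal.span_singleton_pow]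

/-- If `f^n` kills `m` and `a ∈ (f^n)`, then `a` kills `m`. -/
theorem bl_kill {A : Type*} [CommRing A] {f : A} {n : ℕ} {a : A} {M : Type*}
    [AddCommGroup M] [Module A M] {m : M}
    (hm : f ^ n • m = 0) (ha : a ∈ ((Ideal.span {f}) ^ n • ⊤ : Submodule A A)) :
    a • m = 0 := by
  rw [bl_smul_top_eq] at ha
  obtain ⟨c, hc⟩ := Ideal.mem_span_singleton'.mp ha
  rw [← hc, mul_smul, hm, smul_zero]

/-- Killing exponents can be increased. -/
theorem bl_kill_mono {A : Type*} [CommRing A] {f : A} {n n' : ℕ} {M : Type*}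
    [AddCommGroup M] [Module A M] {m : M} (h : n ≤ n') (hm : f ^ n • m = 0) :
    f ^ n' • m = 0 := by
  rw [show n' = (n' - n) + n by omega, pow_add, mul_smul, hm, smul_zero]

/-- A choice of representative of `x.val n`. -/
noncomputable def blLift {A : Type*} [CommRing A] (f : A) (n : ℕ)
    (x : AdicCompletion (Ideal.span {f}) A) : A :=
  (Submodule.Quotient.mk_surjective _ (x.val n)).choose

theorem blLift_spec {A : Type*} [CommRing A] (f : A) (n : ℕ)
    (x : AdicCompletion (Ideal.span {f}) A) :
    Submodule.Quotient.mk (blLift f n x) = x.val n :=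
  (Submodule.Quotient.mk_surjective _ (x.val n)).choose_spec

/-- Independence of the induced action on a torsion element. -/
theorem bl_indep {A : Type*} [CommRing A] {f : A} {M : Type*} [AddCommGroup M] [Module A M]
    (x : AdicCompletion (Ideal.span {f}) A) (m : M) {n₁ n₂ : ℕ} {a₁ a₂ : A}
    (h₁ : f ^ n₁ • m = 0) (h₂ : f ^ n₂ • m = 0)
    (e₁ : Submodule.Quotient.mk a₁ = x.val n₁)
    (e₂ : Submodule.Quotient.mk a₂ = x.val n₂) :
    a₁ • m = a₂ • m := by
  obtain ⟨b, hb⟩ := Submodule.Quotient.mk_surjective _ (x.val (max n₁ n₂))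
  have step : ∀ (n : ℕ) (a : A), n ≤ max n₁ n₂ → f ^ n • m = 0 →
      Submodule.Quotient.mk a = x.val n → a • m = b • m := by
    intro n a hn hfm ha
    have hba : Submodule.Quotient.mk (p := ((Ideal.span {f}) ^ n • ⊤ : Submodule A A)) b
        = Submodule.Quotient.mk a := by
      rw [ha, ← x.property hn, ← hb]
      rfl
    have hmem : b - a ∈ ((Ideal.span {f}) ^ n • ⊤ : Submodule A A) :=
      (Submodule.Quotient.eq _).mp hba
    have : (b - a) • m = 0 := bl_kill hfm hmem
    rw [sub_smul, sub_eq_zero] at this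
    exact this.symm
  rw [step n₁ a₁ (le_max_left _ _) h₁ e₁, step n₂ a₂ (le_max_right _ _) h₂ e₂]

/-- The bilinear action of the completion on a torsion module. -/
noncomputable def blB {A : Type*} [CommRing A] (f : A) (M : Type*)
    [AddCommGroup M] [Module A M] (hM : ∀ m : M, ∃ n : ℕ, f ^ n • m = 0) :
    AdicCompletion (Ideal.span {f}) A →ₗ[A] M →ₗ[A] M :=
  LinearMap.mk₂ A (fun x m ↦ blLift f (hM m).choose x • m)
    (fun x y m ↦ by
      beta_reduce
      have e : Submodule.Quotient.mk (blLift f (hM m).choose x + blLift f (hM m).choose y)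
          = (x + y).val (hM m).choose := by
        rw [Submodule.Quotient.mk_add, blLift_spec, blLift_spec, val_add_apply]
      rw [bl_indep (x + y) m (hM m).choose_spec (hM m).choose_spec
        (blLift_spec f _ _) e, add_smul])
    (fun c x m ↦ by
      beta_reduce
      have e : Submodule.Quotient.mk (c * blLift f (hM m).choose x)
          = (c • x).val (hM m).choose := by
        rw [← smul_eq_mul, Submodule.Quotient.mk_smul, blLift_spec, val_smul_apply]
      rw [bl_indep (c • x) m (hM m).choose_spec (hM m).choose_spec
        (blLift_spec f _ _) e, mul_smul])
    (fun x m₁ m₂ ↦ by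
      beta_reduce
      set N := max (hM m₁).choose (hM m₂).choose with hN
      have hkill₁ : f ^ N • m₁ = 0 := bl_kill_mono (le_max_left _ _) (hM m₁).choose_spec
      have hkill₂ : f ^ N • m₂ = 0 := bl_kill_mono (le_max_right _ _) (hM m₂).choose_spec
      have hkill : f ^ N • (m₁ + m₂) = 0 := by rw [smul_add, hkill₁, hkill₂, add_zero]
      rw [bl_indep x (m₁ + m₂) (hM (m₁ + m₂)).choose_spec hkill
          (blLift_spec f _ _) (blLift_spec f N x), smul_add,
        bl_indep x m₁ hkill₁ (hM m₁).choose_spec (blLift_spec f N x) (blLift_spec f _ _),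
        bl_indep x m₂ hkill₂ (hM m₂).choose_spec (blLift_spec f N x) (blLift_spec f _ _)])
    (fun c x m ↦ by
      beta_reduce
      have hkill : f ^ (hM m).choose • (c • m) = 0 := by
        rw [smul_comm, (hM m).choose_spec, smul_zero]
      rw [bl_indep x (c • m) (hM (c • m)).choose_spec hkill
        (blLift_spec f _ _) (blLift_spec f _ _), smul_comm])

/-- An element of the completion whose `n`-th component vanishes is divisible by `f^n`. -/
theorem bl_eval_zero_exists {A : Type*} [CommRing A] [IsNoetherianRing A] (f : A) (n : ℕ)
    (x : AdicCompletion (Ideal.span {f}) A) (hx : x.val n = 0) :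
    ∃ y : AdicCompletion (Ideal.span {f}) A, x = f ^ n • y := by
  let I := Ideal.span {f}
  let S : Submodule A A := (I ^ n • ⊤ : Submodule A A)
  have hexact := AdicCompletion.map_exact (I := I) (Submodule.injective_subtype S)
    (LinearMap.exact_subtype_mkQ S) (S.mkQ_surjective)
  -- `map I S.mkQ x = 0`
  have hzero : AdicCompletion.map I S.mkQ x = 0 := by
    ext k
    rw [map_val_apply, val_zero_apply]
    obtain ⟨a, ha⟩ := Submodule.Quotient.mk_surjective _ (x.val k)
    rw [← ha, LinearMap.reduceModIdeal_apply, Submodule.Quotient.mk_eq_zero]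
    rcases le_total k n with hkn | hnk
    · -- `x.val k = 0`, so `a ∈ I^k • ⊤`
      have : Submodule.Quotient.mk (p := (I ^ k • ⊤ : Submodule A A)) a = 0 := by
        rw [ha, ← x.property hkn, hx]; exact _root_.map_zero _
      have hmem : a ∈ (I ^ k • ⊤ : Submodule A A) := (Submodule.Quotient.mk_eq_zero _).mp this
      have : S.mkQ a ∈ Submodule.map S.mkQ (I ^ k • ⊤ : Submodule A A) :=
        Submodule.mem_map_of_mem hmem
      rw [Submodule.map_smul'', Submodule.map_top] at this
      exact (smul_mono_right (I ^ k) le_top : I ^ k • LinearMap.range S.mkQ ≤ I ^ k • (⊤ : Submodule A (A ⧸ S))) this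
    · -- `a ∈ I^n • ⊤ = S`, so `S.mkQ a = 0`
      have : Submodule.Quotient.mk (p := (I ^ n • ⊤ : Submodule A A)) a = 0 := by
        rw [show Submodule.Quotient.mk (p := (I ^ n • ⊤ : Submodule A A)) a
            = transitionMap I A hnk (Submodule.Quotient.mk a) from rfl, ha,
          x.property hnk, hx]
      have hmem : a ∈ S := (Submodule.Quotient.mk_eq_zero _).mp this
      rw [show S.mkQ a = 0 from (Submodule.Quotient.mk_eq_zero _).mpr hmem]
      exact Submodule.zero_mem _
  obtain ⟨y', hy'⟩ := (hexact x).mp hzero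
  -- `A` surjects onto `S` via multiplication by `f^n`
  let g' : A →ₗ[A] S := LinearMap.codRestrict S (LinearMap.lsmul A A (f ^ n))
    (fun c ↦ by
      rw [show S = Ideal.span {f ^ n} from bl_smul_top_eq f n]
      exact Ideal.mem_span_singleton'.mpr ⟨c, (mul_comm c (f ^ n)).trans rfl⟩)
  have hg' : Function.Surjective g' := by
    rintro ⟨s, hs⟩
    rw [show S = Ideal.span {f ^ n} from bl_smul_top_eq f n] at hs
    obtain ⟨c, hc⟩ := Ideal.mem_span_singleton'.mp hs
    exact ⟨c, Subtype.ext (by simpa [g', mul_comm] using hc)⟩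
  obtain ⟨z, hz⟩ := AdicCompletion.map_surjective I hg' y'
  refine ⟨z, ?_⟩
  have hcomp : S.subtype ∘ₗ g' = LinearMap.lsmul A A (f ^ n) := rfl
  have : AdicCompletion.map I (LinearMap.lsmul A A (f ^ n)) z = x := by
    rw [← hcomp, ← AdicCompletion.map_comp_apply, hz, hy']
  rw [← this]
  -- `map I (lsmul f^n) = f^n • ·`
  ext k
  obtain ⟨a, ha⟩ := Submodule.Quotient.mk_surjective _ (z.val k)
  rw [map_val_apply, val_smul_apply, ← ha, LinearMap.reduceModIdeal_apply,
    ← Submodule.Quotient.mk_smul]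
  rfl

/-- Beauville–Laszlo Lemme 1: if `A` is Noetherian, `f ∈ A`, and `M` is an `A`-module
set-theoretically supported on `V(f)` (every element is killed by a power of `f`), then
the natural map `M → Â ⊗_A M` into the `f`-adic completion is an isomorphism. -/
theorem supported_module_tensor_adicCompletion_bijective
    {A : Type*} [CommRing A] [IsNoetherianRing A] (f : A)
    (M : Type*) [AddCommGroup M] [Module A M]
    (hM : ∀ m : M, ∃ n : ℕ, f ^ n • m = 0) :
    Function.Bijective
      ⇑(TensorProduct.mk A (AdicCompletion (Ideal.span {f}) A) M 1) := by
  set C := AdicCompletion (Ideal.span {f}) A with hC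
  set g : C ⊗[A] M →ₗ[A] M := TensorProduct.lift (blB f M hM) with hg
  constructor
  · -- injective: `g` is a left inverse
    have hleft : ∀ m : M, g (TensorProduct.mk A C M 1 m) = m := by
      intro m
      have : g ((1 : C) ⊗ₜ[A] m) = blLift f (hM m).choose 1 • m := rfl
      rw [TensorProduct.mk_apply, this,
        bl_indep (1 : C) m (hM m).choose_spec (hM m).choose_spec
          (blLift_spec f _ _) (rfl : Submodule.Quotient.mk 1 = (1 : C).val (hM m).choose),
        one_smul]
    intro m₁ m₂ h
    rw [← hleft m₁, ← hleft m₂, h]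
  · -- surjective
    intro z
    induction z using TensorProduct.induction_on with
    | zero => exact ⟨0, by simp⟩
    | tmul x m =>
        obtain ⟨n, hn⟩ := hM m
        set a := blLift f n x with ha
        refine ⟨a • m, ?_⟩
        obtain ⟨y, hy⟩ := bl_eval_zero_exists f n (x - a • 1) (by
          rw [val_sub_apply, val_smul_apply, ← blLift_spec f n x,
            show ((1 : C).val n) = Submodule.Quotient.mk 1 from rfl,
            ← Submodule.Quotient.mk_smul]
          simp [ha])
        have hxm : x ⊗ₜ[A] m = (a • (1 : C)) ⊗ₜ[A] m := by
          have h0 : (x - a • (1 : C)) ⊗ₜ[A] m = 0 := by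
            rw [hy, TensorProduct.smul_tmul, hn, TensorProduct.tmul_zero]
          rw [TensorProduct.sub_tmul, sub_eq_zero] at h0
          exact h0
        rw [TensorProduct.mk_apply, TensorProduct.tmul_smul, TensorProduct.smul_tmul']
        exact hxm.symm
    | add u v hu hv =>
        obtain ⟨mu, hmu⟩ := hu
        obtain ⟨mv, hmv⟩ := hv
        exact ⟨mu + mv, by rw [map_add, hmu, hmv]⟩
end

section
/- Let A be a Noetherian commutative ring, f ∈ A, and let Â be the f-adic completion of A. Let Ann_A(f) ⊆ A denote the ideal of elements annihilated by some power of f, and define Ann_Â(f) ⊆ Â similarly. Then the natural map A → Â induces an isomorphism Ann_A(f) ≅ Ann_Â(f). -/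
/-- Stability of the chain of annihilators of powers of `f` in a Noetherian ring. -/
private lemma ann_pow_stab {A : Type*} [CommRing A] [IsNoetherianRing A] (f : A) :
    ∃ N : ℕ, ∀ m, N ≤ m → ∀ c : A, f ^ m * c = 0 → f ^ N * c = 0 := by
  have hmono : Monotone (fun n => LinearMap.ker (LinearMap.mulLeft A (f ^ n))) := by
    intro m n hmn x hx
    simp only [LinearMap.mem_ker, LinearMap.mulLeft_apply] at hx ⊢
    rw [← Nat.sub_add_cancel hmn, pow_add, mul_assoc, hx, mul_zero]
  obtain ⟨N, hN⟩ := monotone_stabilizes_iff_noetherian.mpr inferInstance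
    ⟨fun n => LinearMap.ker (LinearMap.mulLeft A (f ^ n)), hmono⟩
  refine ⟨N, fun m hm c hc => ?_⟩
  have hx : c ∈ LinearMap.ker (LinearMap.mulLeft A (f ^ m)) := by simpa using hc
  have hx2 : c ∈ LinearMap.ker (LinearMap.mulLeft A (f ^ N)) := by
    rw [show LinearMap.ker (LinearMap.mulLeft A (f ^ N))
        = LinearMap.ker (LinearMap.mulLeft A (f ^ m)) from hN m hm]
    exact hx
  simpa using hx2

private lemma mem_span_pow_smul_top {A : Type*} [CommRing A] (f : A) (k : ℕ) (x : A) :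
    x ∈ (Ideal.span {f} ^ k • ⊤ : Ideal A) ↔ f ^ k ∣ x := by
  rw [smul_eq_mul, Ideal.mul_top, Ideal.span_singleton_pow, Ideal.mem_span_singleton]

/-- For `A` Noetherian and `f ∈ A`, the natural map `A → Â` to the `f`-adic completion
restricts to a bijection between the ideal of elements of `A` annihilated by a power of `f`
and the ideal of elements of `Â` annihilated by a power of (the image of) `f`. -/
theorem annihilator_powers_bijOn_adicCompletion
    {A : Type*} [CommRing A] [IsNoetherianRing A] (f : A) :
    Set.BijOn (algebraMap A (AdicCompletion (Ideal.span {f}) A))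
      {a : A | ∃ n : ℕ, f ^ n * a = 0}
      {b : AdicCompletion (Ideal.span {f}) A |
        ∃ n : ℕ, algebraMap A (AdicCompletion (Ideal.span {f}) A) f ^ n * b = 0} := by
  set I : Ideal A := Ideal.span {f} with hI
  set φ := algebraMap A (AdicCompletion I A) with hφ
  obtain ⟨N, hN⟩ := ann_pow_stab f
  -- the value of `φ r` at level `k`
  have hval : ∀ (r : A) (k : ℕ),
      (φ r).val k = Ideal.Quotient.mk (I ^ k • ⊤ : Ideal A) r := fun _ _ => rfl
  refine ⟨?_, ?_, ?_⟩
  · -- MapsTo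
    intro a ha
    obtain ⟨n, hn⟩ := ha
    refine ⟨n, ?_⟩
    rw [← map_pow, ← map_mul, hn, map_zero]
  · -- InjOn
    intro a ha a' ha' hEq
    obtain ⟨m1, h1⟩ := ha
    obtain ⟨m2, h2⟩ := ha'
    have hm : f ^ (m1 + m2) * (a - a') = 0 := by linear_combination f ^ m2 * h1 - f ^ m1 * h2
    set m := m1 + m2
    -- `a - a'` is divisible by every power of `f`
    have hdvd : f ^ (N + m) ∣ (a - a') := by
      rw [← mem_span_pow_smul_top f (N + m) (a - a'),
        ← Ideal.Quotient.eq (I := (I ^ (N + m) • ⊤ : Ideal A))]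
      have := congrArg (fun z : AdicCompletion I A => z.val (N + m)) hEq
      simpa [hval] using this
    obtain ⟨c, hc⟩ := hdvd
    have h0 : f ^ (N + 2 * m) * c = 0 := by linear_combination hm - f ^ m * hc
    have h1' : f ^ N * c = 0 := hN (N + 2 * m) (by omega) c h0
    have : a - a' = 0 := by linear_combination hc + f ^ m * h1'
    exact sub_eq_zero.mp this
  · -- SurjOn
    intro b hb
    obtain ⟨n, hn⟩ := hb
    have hn' : φ (f ^ n) * b = 0 := by rw [map_pow]; exact hn
    -- component form of `hn'`
    have hcomp : ∀ k : ℕ, ∀ y : A, Ideal.Quotient.mk (I ^ k • ⊤ : Ideal A) y = b.val k →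
        f ^ k ∣ f ^ n * y := by
      intro k y hy
      rw [← mem_span_pow_smul_top f k, ← Ideal.Quotient.eq_zero_iff_mem]
      have := congrArg (fun z : AdicCompletion I A => z.val k) hn'
      simp only [AdicCompletion.val_mul, AdicCompletion.val_zero, hval, hy] at this
      rw [map_mul, hy]
      exact this
    -- lift of `b` at level `2n + N`
    obtain ⟨x, hx⟩ := Ideal.Quotient.mk_surjective (I := (I ^ (2 * n + N) • ⊤ : Ideal A))
      (b.val (2 * n + N))
    obtain ⟨c, hc⟩ := hcomp (2 * n + N) x hx
    refine ⟨x - f ^ (n + N) * c, ⟨n, by linear_combination hc⟩, ?_⟩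
    -- show the image is `b`
    ext k
    obtain ⟨y, hy⟩ := Ideal.Quotient.mk_surjective (I := (I ^ (k + 2 * n + N) • ⊤ : Ideal A))
      (b.val (k + 2 * n + N))
    -- `b.val k = mk y`
    have hbk : b.val k = Ideal.Quotient.mk (I ^ k • ⊤ : Ideal A) y := by
      rw [← b.property (show k ≤ k + 2 * n + N by omega), ← hy]
      rfl
    -- `mk x = mk y` at level `2n + N`
    have hxy : f ^ (2 * n + N) ∣ (x - y) := by
      rw [← mem_span_pow_smul_top f (2 * n + N) (x - y), ← Ideal.Quotient.eq]
      rw [hx, ← b.property (show 2 * n + N ≤ k + 2 * n + N by omega), ← hy]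
      rfl
    obtain ⟨u, hu⟩ := hxy
    -- `f^n * y` divisible by `f^(k + 2n + N)`
    obtain ⟨g, hg⟩ := hcomp (k + 2 * n + N) y hy
    -- stability argument
    have h0 : f ^ (2 * n + N) * (f ^ n * u - c + f ^ k * g) = 0 := by
      linear_combination hc - f ^ n * hu - hg
    have h1' : f ^ N * (f ^ n * u - c + f ^ k * g) = 0 := hN (2 * n + N) (by omega) _ h0
    have hfinal : (x - f ^ (n + N) * c) - y = f ^ k * (-(f ^ (n + N) * g)) := by
      linear_combination hu + f ^ n * h1'
    rw [hval, hbk, Ideal.Quotient.eq, mem_span_pow_smul_top]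
    exact ⟨-(f ^ (n + N) * g), hfinal⟩
end

section
/- Let Y be a scheme over a field k equipped with an étale morphism f : Y → 𝔸^n. For each finite set I, there is an isomorphism between the formal completion of Y^{{0} ⊔ I} along the small diagonal Y and Y × (D^n)^I, where D^n is the formal completion of 𝔸^n at the origin, and these isomorphisms are functorial in I. -/
/-- The inclusion of the `i`-th tensor factor: `b ↦ 1 ⊗ ⋯ ⊗ b ⊗ ⋯ ⊗ 1` in
`B^{⊗ Option I}`, the ring of functions of `Y^{{0} ⊔ I}` for affine `Y = Spec B`. -/
noncomputable def inclFactor (k B : Type) [CommRing k] [CommRing B] [Algebra k B]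
    {I : Type} [DecidableEq I] (i : Option I) (b : B) :
    PiTensorProduct k fun _ : Option I => B :=
  PiTensorProduct.tprod k (Function.update (fun _ : Option I => (1 : B)) i b)

/-- The ideal of the small diagonal `Y ↪ Y^{{0} ⊔ I}`, generated by the differences
`(1 ⊗ ⋯ ⊗ b ⊗ ⋯ ⊗ 1) - (b ⊗ 1 ⊗ ⋯ ⊗ 1)`. -/
noncomputable def diagIdeal (k B : Type) [CommRing k] [CommRing B] [Algebra k B]
    (I : Type) [DecidableEq I] : Ideal (PiTensorProduct k fun _ : Option I => B) :=
  Ideal.span {x | ∃ (i : Option I) (b : B),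
    x = inclFactor k B i b - inclFactor k B none b}

/-- The ideal of the origin section `Y ↪ Y × (𝔸^n)^I`, generated by the coordinates
`x_{i,m}`. -/
noncomputable def originIdeal (B : Type) [CommRing B] (I : Type) (n : ℕ) :
    Ideal (MvPolynomial (I × Fin n) B) :=
  Ideal.span (Set.range fun v : I × Fin n =>
    (MvPolynomial.X v : MvPolynomial (I × Fin n) B))


set_option linter.unusedSectionVars false
set_option synthInstance.maxHeartbeats 1000000
set_option maxHeartbeats 1600000

namespace FCAD

variable (k : Type) [Field k] (n : ℕ) (B : Type) [CommRing B] [Algebra k B]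
variable [Algebra (MvPolynomial (Fin n) k) B] [IsScalarTower k (MvPolynomial (Fin n) k) B]

/-- The coordinates of the étale map, as elements of `B`. -/
noncomputable def cc (m : Fin n) : B :=
  algebraMap (MvPolynomial (Fin n) k) B (MvPolynomial.X m)

variable (I : Type) (d : ℕ)

/-- `B → P/M^{d+1}`, constants. -/
noncomputable def iot : B →ₐ[k] (MvPolynomial (I × Fin n) B ⧸ (originIdeal B I n) ^ (d + 1)) :=
  (Ideal.Quotient.mkₐ k _).comp (IsScalarTower.toAlgHom k B _)

lemma iot_apply (b : B) :
    iot k n B I d b = Ideal.Quotient.mk _ (MvPolynomial.C b) := rfl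

/-- The translated coordinate map `k[x] → P/M^{d+1}`, `x_m ↦ c_m + X_{i,m}`. -/
noncomputable def tau (i : I) :
    MvPolynomial (Fin n) k →ₐ[k] (MvPolynomial (I × Fin n) B ⧸ (originIdeal B I n) ^ (d + 1)) :=
  MvPolynomial.aeval fun m =>
    iot k n B I d (cc k n B m) + Ideal.Quotient.mk _ (MvPolynomial.X (i, m))

lemma tau_X (i : I) (m : Fin n) :
    tau k n B I d i (MvPolynomial.X m)
      = iot k n B I d (cc k n B m) + Ideal.Quotient.mk _ (MvPolynomial.X (i, m)) := by
  simp [tau]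

/-- The image of `M` in `P/M^{d+1}`. -/
noncomputable def Mbar : Ideal (MvPolynomial (I × Fin n) B ⧸ (originIdeal B I n) ^ (d + 1)) :=
  (originIdeal B I n).map (Ideal.Quotient.mk _)

lemma Mbar_pow : (Mbar n B I d) ^ (d + 1) = ⊥ := by
  rw [Mbar, ← Ideal.map_pow, Ideal.map_quotient_self]

lemma Mbar_nilp : IsNilpotent (Mbar n B I d) := ⟨d + 1, Mbar_pow n B I d⟩

lemma X_mem_Mbar (v : I × Fin n) :
    Ideal.Quotient.mk ((originIdeal B I n) ^ (d + 1)) (MvPolynomial.X v) ∈ Mbar n B I d :=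
  Ideal.mem_map_of_mem _ (Ideal.subset_span ⟨v, rfl⟩)

end FCAD

namespace FCAD

variable (k : Type) [Field k] (n : ℕ) (B : Type) [CommRing B] [Algebra k B]
variable [Algebra (MvPolynomial (Fin n) k) B] [IsScalarTower k (MvPolynomial (Fin n) k) B]
variable (I : Type) (d : ℕ)

set_option linter.unusedSectionVars false
set_option synthInstance.maxHeartbeats 1000000
set_option maxHeartbeats 1600000

theorem exists_g (het : Algebra.Etale (MvPolynomial (Fin n) k) B) (i : I) :
    ∃ f : B →ₐ[k] (MvPolynomial (I × Fin n) B ⧸ (originIdeal B I n) ^ (d + 1)),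
      (∀ r, f (algebraMap (MvPolynomial (Fin n) k) B r) = tau k n B I d i r) ∧
      (∀ b, Ideal.Quotient.mk (Mbar n B I d) (f b)
          = Ideal.Quotient.mk (Mbar n B I d) (iot k n B I d b)) := by
  haveI := het.formallyEtale
  letI : Algebra (MvPolynomial (Fin n) k)
      (MvPolynomial (I × Fin n) B ⧸ (originIdeal B I n) ^ (d + 1)) :=
    (tau k n B I d i).toRingHom.toAlgebra
  -- the reduction `B → (P/M^{d+1})/Mbar` as a `k[x]`-algebra map
  have hcomm : ∀ r : MvPolynomial (Fin n) k,
      Ideal.Quotient.mk (Mbar n B I d) (iot k n B I d (algebraMap _ B r))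
        = Ideal.Quotient.mk (Mbar n B I d) (tau k n B I d i r) := by
    intro r
    have : ((Ideal.Quotient.mkₐ k (Mbar n B I d)).comp (iot k n B I d)).comp
          (IsScalarTower.toAlgHom k (MvPolynomial (Fin n) k) B)
        = (Ideal.Quotient.mkₐ k (Mbar n B I d)).comp (tau k n B I d i) := by
      apply MvPolynomial.algHom_ext
      intro m
      simp only [AlgHom.comp_apply, IsScalarTower.coe_toAlgHom', Ideal.Quotient.mkₐ_eq_mk,
        tau_X, map_add]
      have : Ideal.Quotient.mk (Mbar n B I d)
          (Ideal.Quotient.mk ((originIdeal B I n) ^ (d + 1)) (MvPolynomial.X (i, m))) = 0 :=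
        Ideal.Quotient.eq_zero_iff_mem.mpr (X_mem_Mbar n B I d (i, m))
      rw [this, add_zero]
      rfl
    exact DFunLike.congr_fun this r
  let g0 : B →ₐ[MvPolynomial (Fin n) k]
      ((MvPolynomial (I × Fin n) B ⧸ (originIdeal B I n) ^ (d + 1)) ⧸ Mbar n B I d) :=
    { toRingHom := (Ideal.Quotient.mk (Mbar n B I d)).comp (iot k n B I d).toRingHom
      commutes' := fun r => (hcomm r).trans rfl }
  let f' := Algebra.FormallySmooth.lift (Mbar n B I d) (Mbar_nilp n B I d) g0
  letI := IsScalarTower.of_algebraMap_eq' (R := k) (S := MvPolynomial (Fin n) k)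
      (A := MvPolynomial (I × Fin n) B ⧸ (originIdeal B I n) ^ (d + 1))
      (RingHom.ext fun a => ((tau k n B I d i).commutes a).symm)
  refine ⟨f'.restrictScalars k, fun r => ?_, fun b => ?_⟩
  · exact f'.commutes r
  · exact (Algebra.FormallySmooth.mk_lift (Mbar n B I d) (Mbar_nilp n B I d) g0 b).trans rfl

/-- The `i`-th deformed factor map `B → P/M^{d+1}`. -/
noncomputable def gg (het : Algebra.Etale (MvPolynomial (Fin n) k) B) (i : I) :
    B →ₐ[k] (MvPolynomial (I × Fin n) B ⧸ (originIdeal B I n) ^ (d + 1)) :=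
  (exists_g k n B I d het i).choose

lemma gg_spec1 (het : Algebra.Etale (MvPolynomial (Fin n) k) B) (i : I)
    (r : MvPolynomial (Fin n) k) :
    gg k n B I d het i (algebraMap (MvPolynomial (Fin n) k) B r) = tau k n B I d i r :=
  (exists_g k n B I d het i).choose_spec.1 r

lemma gg_spec2 (het : Algebra.Etale (MvPolynomial (Fin n) k) B) (i : I) (b : B) :
    gg k n B I d het i b - iot k n B I d b ∈ Mbar n B I d :=
  Ideal.Quotient.eq.mp ((exists_g k n B I d het i).choose_spec.2 b)

/-- Uniqueness of maps out of `B` agreeing on `k[x]` and modulo a nilpotent ideal. -/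
theorem alg_unique (het : Algebra.Etale (MvPolynomial (Fin n) k) B)
    {C' : Type} [CommRing C'] [Algebra k C']
    (τ' : MvPolynomial (Fin n) k →ₐ[k] C') (N : Ideal C') (hN : IsNilpotent N)
    (f₁ f₂ : B →ₐ[k] C')
    (h₁ : ∀ r, f₁ (algebraMap (MvPolynomial (Fin n) k) B r) = τ' r)
    (h₂ : ∀ r, f₂ (algebraMap (MvPolynomial (Fin n) k) B r) = τ' r)
    (h : ∀ b, f₁ b - f₂ b ∈ N) : f₁ = f₂ := by
  haveI := het.formallyEtale
  letI : Algebra (MvPolynomial (Fin n) k) C' := τ'.toRingHom.toAlgebra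
  let F₁ : B →ₐ[MvPolynomial (Fin n) k] C' := { f₁.toRingHom with commutes' := fun r => (h₁ r).trans rfl }
  let F₂ : B →ₐ[MvPolynomial (Fin n) k] C' := { f₂.toRingHom with commutes' := fun r => (h₂ r).trans rfl }
  have key : F₁ = F₂ := by
    apply Algebra.FormallyUnramified.lift_unique N hN
    ext b
    exact Ideal.Quotient.eq.mpr (h b)
  exact AlgHom.ext fun b => DFunLike.congr_fun key b

end FCAD

namespace FCAD

variable (k : Type) [Field k] (n : ℕ) (B : Type) [CommRing B] [Algebra k B]
variable [Algebra (MvPolynomial (Fin n) k) B] [IsScalarTower k (MvPolynomial (Fin n) k) B]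
variable (I : Type) [Fintype I] [DecidableEq I] (d : ℕ)

set_option linter.unusedSectionVars false
set_option synthInstance.maxHeartbeats 1000000
set_option maxHeartbeats 1600000

/-- The factor maps. -/
noncomputable def FF (het : Algebra.Etale (MvPolynomial (Fin n) k) B) (j : Option I) :
    B →ₐ[k] (MvPolynomial (I × Fin n) B ⧸ (originIdeal B I n) ^ (d + 1)) :=
  j.elim (iot k n B I d) (gg k n B I d het)

/-- The comparison map `B^{⊗ Option I} → P/M^{d+1}`. -/
noncomputable def uu (het : Algebra.Etale (MvPolynomial (Fin n) k) B) :
    (PiTensorProduct k fun _ : Option I => B) →ₐ[k]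
      (MvPolynomial (I × Fin n) B ⧸ (originIdeal B I n) ^ (d + 1)) :=
  PiTensorProduct.liftAlgHom
    ((MultilinearMap.mkPiAlgebra k (Option I) _).compLinearMap
      fun j => (FF k n B I d het j).toLinearMap)
    (by simp)
    (by intro x y; simp [Finset.prod_mul_distrib])

lemma uu_tprod (het : Algebra.Etale (MvPolynomial (Fin n) k) B) (f : Option I → B) :
    uu k n B I d het (PiTensorProduct.tprod k f) = ∏ j, FF k n B I d het j (f j) := by
  simp [uu]

lemma incl_single (j : Option I) (b : B) :
    inclFactor k B j b = PiTensorProduct.singleAlgHom (R := k) (A := fun _ : Option I => B) j b :=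
  rfl

lemma uu_incl (het : Algebra.Etale (MvPolynomial (Fin n) k) B) (j : Option I) (b : B) :
    uu k n B I d het (inclFactor k B j b) = FF k n B I d het j b := by
  rw [inclFactor, uu_tprod]
  rw [Finset.prod_eq_single j (fun j' _ hj' => by
        rw [Function.update_of_ne hj']; exact map_one _)
      (fun h => absurd (Finset.mem_univ j) h)]
  rw [Function.update_self]

end FCAD

namespace FCAD

variable (k : Type) [Field k] (n : ℕ) (B : Type) [CommRing B] [Algebra k B]
variable [Algebra (MvPolynomial (Fin n) k) B] [IsScalarTower k (MvPolynomial (Fin n) k) B]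
variable (I : Type) [Fintype I] [DecidableEq I] (d : ℕ)

set_option linter.unusedSectionVars false
set_option synthInstance.maxHeartbeats 1000000
set_option maxHeartbeats 1600000

lemma uu_X (het : Algebra.Etale (MvPolynomial (Fin n) k) B) (i : I) (m : Fin n) :
    uu k n B I d het (inclFactor k B (some i) (cc k n B m)
        - inclFactor k B none (cc k n B m))
      = Ideal.Quotient.mk ((originIdeal B I n) ^ (d + 1)) (MvPolynomial.X (i, m)) := by
  rw [map_sub, uu_incl, uu_incl]
  show gg k n B I d het i (cc k n B m) - iot k n B I d (cc k n B m) = _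
  rw [cc, gg_spec1, tau_X]
  rw [show algebraMap (MvPolynomial (Fin n) k) B (MvPolynomial.X m) = cc k n B m from rfl]
  ring

theorem uu_surjective (het : Algebra.Etale (MvPolynomial (Fin n) k) B) :
    Function.Surjective (uu k n B I d het) := by
  intro x
  obtain ⟨p, rfl⟩ := Ideal.Quotient.mk_surjective x
  induction p using MvPolynomial.induction_on with
  | C b => exact ⟨inclFactor k B none b, uu_incl k n B I d het none b⟩
  | add p q hp hq =>
      obtain ⟨t, ht⟩ := hp; obtain ⟨s, hs⟩ := hq
      exact ⟨t + s, by rw [map_add, ht, hs, map_add]⟩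
  | mul_X p v hp =>
      obtain ⟨t, ht⟩ := hp
      refine ⟨t * (inclFactor k B (some v.1) (cc k n B v.2)
        - inclFactor k B none (cc k n B v.2)), ?_⟩
      rw [map_mul, ht, uu_X, map_mul]

theorem uu_J_le (het : Algebra.Etale (MvPolynomial (Fin n) k) B) :
    Ideal.map (uu k n B I d het) (diagIdeal k B I) ≤ Mbar n B I d := by
  rw [diagIdeal, Ideal.map_span, Ideal.span_le]
  rintro x ⟨y, ⟨i, b, rfl⟩, rfl⟩
  rw [map_sub, uu_incl, uu_incl]
  cases i with
  | none => show FF k n B I d het none b - FF k n B I d het none b ∈ _; rw [sub_self]; exact zero_mem _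
  | some i => exact gg_spec2 k n B I d het i b

theorem uu_zero_of_mem (het : Algebra.Etale (MvPolynomial (Fin n) k) B)
    {t : PiTensorProduct k fun _ : Option I => B}
    (ht : t ∈ (diagIdeal k B I) ^ (d + 1)) : uu k n B I d het t = 0 := by
  have h1 : uu k n B I d het t ∈ Ideal.map (uu k n B I d het) ((diagIdeal k B I) ^ (d + 1)) :=
    Ideal.mem_map_of_mem _ ht
  rw [Ideal.map_pow] at h1
  have h2 := Ideal.pow_right_mono (uu_J_le k n B I d het) (d+1) h1
  rw [Mbar_pow] at h2
  simpa using h2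

end FCAD

namespace FCAD

variable (k : Type) [Field k] (n : ℕ) (B : Type) [CommRing B] [Algebra k B]
variable [Algebra (MvPolynomial (Fin n) k) B] [IsScalarTower k (MvPolynomial (Fin n) k) B]
variable (I : Type) [Fintype I] [DecidableEq I] (d : ℕ)

set_option linter.unusedSectionVars false
set_option synthInstance.maxHeartbeats 1000000
set_option maxHeartbeats 1600000

/-- The image of the diagonal ideal in `T/J^{d+1}`. -/
noncomputable def Jbar : Ideal ((PiTensorProduct k fun _ : Option I => B) ⧸ (diagIdeal k B I) ^ (d + 1)) :=
  (diagIdeal k B I).map (Ideal.Quotient.mk _)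

lemma Jbar_pow : (Jbar k B I d) ^ (d + 1) = ⊥ := by
  rw [Jbar, ← Ideal.map_pow, Ideal.map_quotient_self]

lemma Jbar_nilp : IsNilpotent (Jbar k B I d) := ⟨d + 1, Jbar_pow k B I d⟩

lemma gen_mem_J (i : Option I) (b : B) :
    inclFactor k B i b - inclFactor k B none b ∈ diagIdeal k B I :=
  Ideal.subset_span ⟨i, b, rfl⟩

/-- `P → T/J^{d+1}`, the candidate inverse on polynomial rings. -/
noncomputable def ww : MvPolynomial (I × Fin n) B →ₐ[k]
    ((PiTensorProduct k fun _ : Option I => B) ⧸ (diagIdeal k B I) ^ (d + 1)) :=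
  { MvPolynomial.eval₂Hom
      ((Ideal.Quotient.mk ((diagIdeal k B I) ^ (d + 1))).comp
        (PiTensorProduct.singleAlgHom (R := k) (A := fun _ : Option I => B) none).toRingHom)
      (fun v : I × Fin n =>
        Ideal.Quotient.mk ((diagIdeal k B I) ^ (d + 1))
          (inclFactor k B (some v.1) (cc k n B v.2)
            - inclFactor k B none (cc k n B v.2))) with
    commutes' := fun a => by
      simp only [RingHom.toMonoidHom_eq_coe, OneHom.toFun_eq_coe, MonoidHom.toOneHom_coe,
        MonoidHom.coe_coe]
      rw [show algebraMap k (MvPolynomial (I × Fin n) B) a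
            = MvPolynomial.C (algebraMap k B a) from rfl,
        MvPolynomial.eval₂Hom_C, RingHom.comp_apply]
      rw [show ((PiTensorProduct.singleAlgHom (R := k) (A := fun _ : Option I => B) none).toRingHom
            (algebraMap k B a)) = algebraMap k _ a from
          (PiTensorProduct.singleAlgHom (R := k) (A := fun _ : Option I => B) none).commutes a]
      rfl }

lemma ww_C (b : B) :
    ww k n B I d (MvPolynomial.C b)
      = Ideal.Quotient.mk _ (inclFactor k B none b) := by
  show MvPolynomial.eval₂Hom _ _ (MvPolynomial.C b) = _
  rw [MvPolynomial.eval₂Hom_C]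
  rfl

lemma ww_X (v : I × Fin n) :
    ww k n B I d (MvPolynomial.X v)
      = Ideal.Quotient.mk _ (inclFactor k B (some v.1) (cc k n B v.2)
          - inclFactor k B none (cc k n B v.2)) := by
  show MvPolynomial.eval₂Hom _ _ (MvPolynomial.X v) = _
  rw [MvPolynomial.eval₂Hom_X']

lemma ww_X_mem (v : I × Fin n) : ww k n B I d (MvPolynomial.X v) ∈ Jbar k B I d := by
  rw [ww_X]
  exact Ideal.mem_map_of_mem _ (gen_mem_J k B I (some v.1) (cc k n B v.2))

lemma ww_ker : ∀ p ∈ (originIdeal B I n) ^ (d + 1), ww k n B I d p = 0 := by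
  intro p hp
  have h1 : ww k n B I d p ∈ Ideal.map (ww k n B I d) ((originIdeal B I n) ^ (d + 1)) :=
    Ideal.mem_map_of_mem _ hp
  rw [Ideal.map_pow] at h1
  have hle : Ideal.map (ww k n B I d) (originIdeal B I n) ≤ Jbar k B I d := by
    rw [originIdeal, Ideal.map_span, Ideal.span_le]
    rintro x ⟨y, ⟨v, rfl⟩, rfl⟩
    exact ww_X_mem k n B I d v
  have h2 := Ideal.pow_right_mono hle (d + 1) h1
  rw [Jbar_pow] at h2
  simpa using h2

/-- The inverse comparison map `P/M^{d+1} → T/J^{d+1}`. -/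
noncomputable def vv : (MvPolynomial (I × Fin n) B ⧸ (originIdeal B I n) ^ (d + 1)) →ₐ[k]
    ((PiTensorProduct k fun _ : Option I => B) ⧸ (diagIdeal k B I) ^ (d + 1)) :=
  Ideal.Quotient.liftₐ _ (ww k n B I d) (ww_ker k n B I d)

lemma vv_mk (p : MvPolynomial (I × Fin n) B) :
    vv k n B I d (Ideal.Quotient.mk _ p) = ww k n B I d p := by
  simp [vv]
  rfl

lemma vv_Mbar {x} (hx : x ∈ Mbar n B I d) : vv k n B I d x ∈ Jbar k B I d := by
  have hle : Ideal.map (vv k n B I d).toRingHom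
      (Ideal.map (Ideal.Quotient.mk ((originIdeal B I n) ^ (d + 1))) (originIdeal B I n))
        ≤ Jbar k B I d := by
    rw [Ideal.map_map]
    unfold originIdeal
    rw [Ideal.map_span, Ideal.span_le]
    rintro x ⟨y, ⟨v, rfl⟩, rfl⟩
    show vv k n B I d (Ideal.Quotient.mk _ (MvPolynomial.X v)) ∈ _
    rw [vv_mk]
    exact ww_X_mem k n B I d v
  exact hle (Ideal.mem_map_of_mem _ hx)

end FCAD

namespace FCAD

variable (k : Type) [Field k] (n : ℕ) (B : Type) [CommRing B] [Algebra k B]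
variable [Algebra (MvPolynomial (Fin n) k) B] [IsScalarTower k (MvPolynomial (Fin n) k) B]
variable (I : Type) [Fintype I] [DecidableEq I] (d : ℕ)

set_option linter.unusedSectionVars false
set_option synthInstance.maxHeartbeats 1000000
set_option maxHeartbeats 1600000

theorem vu (het : Algebra.Etale (MvPolynomial (Fin n) k) B)
    (t : PiTensorProduct k fun _ : Option I => B) :
    vv k n B I d (uu k n B I d het t)
      = Ideal.Quotient.mk ((diagIdeal k B I) ^ (d + 1)) t := by
  have key : (vv k n B I d).comp (uu k n B I d het)
      = Ideal.Quotient.mkₐ k ((diagIdeal k B I) ^ (d + 1)) := by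
    apply PiTensorProduct.algHom_ext
    intro j
    ext b
    show vv k n B I d (uu k n B I d het (PiTensorProduct.singleAlgHom j b))
      = Ideal.Quotient.mk _ (PiTensorProduct.singleAlgHom (R := k) (A := fun _ : Option I => B) j b)
    rw [← incl_single, uu_incl]
    cases j with
    | none =>
        show vv k n B I d (iot k n B I d b) = _
        rw [iot_apply, vv_mk, ww_C, incl_single]
    | some i =>
        show vv k n B I d (gg k n B I d het i b) = _
        have main : (vv k n B I d).comp (gg k n B I d het i)
            = ((Ideal.Quotient.mkₐ k ((diagIdeal k B I) ^ (d + 1))).comp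
                (PiTensorProduct.singleAlgHom (R := k) (A := fun _ : Option I => B) (some i))) := by
          refine alg_unique k n B het
            ((((Ideal.Quotient.mkₐ k ((diagIdeal k B I) ^ (d + 1))).comp
                (PiTensorProduct.singleAlgHom (R := k) (A := fun _ : Option I => B) (some i))).comp
              (IsScalarTower.toAlgHom k (MvPolynomial (Fin n) k) B)))
            (Jbar k B I d) (Jbar_nilp k B I d) _ _ ?_ ?_ ?_
          · intro r
            rw [AlgHom.comp_apply, gg_spec1]
            have : (vv k n B I d).comp (tau k n B I d i)
                = (((Ideal.Quotient.mkₐ k ((diagIdeal k B I) ^ (d + 1))).comp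
                    (PiTensorProduct.singleAlgHom (R := k) (A := fun _ : Option I => B) (some i))).comp
                  (IsScalarTower.toAlgHom k (MvPolynomial (Fin n) k) B)) := by
              apply MvPolynomial.algHom_ext
              intro m
              rw [AlgHom.comp_apply, tau_X, map_add, iot_apply, vv_mk, ww_C, vv_mk, ww_X]
              show _ = Ideal.Quotient.mk _
                (PiTensorProduct.singleAlgHom (R := k) (A := fun _ : Option I => B) (some i)
                  (cc k n B m))
              rw [← incl_single, ← map_add]
              congr 1
              ring
            exact DFunLike.congr_fun this r
          · intro r; rfl
          · intro b
            have e1 : vv k n B I d (gg k n B I d het i b)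
                - ((Ideal.Quotient.mkₐ k ((diagIdeal k B I) ^ (d + 1))).comp
                    (PiTensorProduct.singleAlgHom (R := k) (A := fun _ : Option I => B) (some i))) b
                = vv k n B I d (gg k n B I d het i b - iot k n B I d b)
                  - Ideal.Quotient.mk _ (inclFactor k B (some i) b - inclFactor k B none b) := by
              rw [map_sub, map_sub]
              rw [show ((Ideal.Quotient.mkₐ k ((diagIdeal k B I) ^ (d + 1))).comp
                    (PiTensorProduct.singleAlgHom (R := k) (A := fun _ : Option I => B) (some i))) b
                  = Ideal.Quotient.mk _ (inclFactor k B (some i) b) from rfl]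
              rw [show vv k n B I d (iot k n B I d b)
                  = Ideal.Quotient.mk _ (inclFactor k B none b) from by
                rw [iot_apply, vv_mk, ww_C]]
              ring
            rw [show ((vv k n B I d).comp (gg k n B I d het i)) b = vv k n B I d (gg k n B I d het i b) from rfl]
            rw [e1]
            exact sub_mem (vv_Mbar k n B I d (gg_spec2 k n B I d het i b))
              (Ideal.mem_map_of_mem _ (gen_mem_J k B I (some i) b))
        exact DFunLike.congr_fun main b
  exact DFunLike.congr_fun key t

theorem uu_ker_iff (het : Algebra.Etale (MvPolynomial (Fin n) k) B)
    (t : PiTensorProduct k fun _ : Option I => B) :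
    uu k n B I d het t = 0 ↔ t ∈ (diagIdeal k B I) ^ (d + 1) := by
  constructor
  · intro h
    have := vu k n B I d het t
    rw [h, map_zero] at this
    exact Ideal.Quotient.eq_zero_iff_mem.mp this.symm
  · exact uu_zero_of_mem k n B I d het

end FCAD

namespace FCAD

variable (k : Type) [Field k] (n : ℕ) (B : Type) [CommRing B] [Algebra k B]
variable [Algebra (MvPolynomial (Fin n) k) B] [IsScalarTower k (MvPolynomial (Fin n) k) B]
variable (I : Type) [Fintype I] [DecidableEq I] (d : ℕ)

set_option linter.unusedSectionVars false
set_option synthInstance.maxHeartbeats 1000000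
set_option maxHeartbeats 1600000

/-- Reduction of levels. -/
noncomputable def pp : (MvPolynomial (I × Fin n) B ⧸ (originIdeal B I n) ^ (d + 1 + 1)) →ₐ[k]
    (MvPolynomial (I × Fin n) B ⧸ (originIdeal B I n) ^ (d + 1)) :=
  Ideal.Quotient.liftₐ _ (Ideal.Quotient.mkₐ k ((originIdeal B I n) ^ (d + 1)))
    (fun a ha => Ideal.Quotient.eq_zero_iff_mem.mpr
      (Ideal.pow_le_pow_right (Nat.le_succ (d + 1)) ha))

lemma pp_mk (q : MvPolynomial (I × Fin n) B) :
    pp k n B I d (Ideal.Quotient.mk _ q) = Ideal.Quotient.mk _ q := by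
  simp [pp]
  rfl

lemma pp_Mbar {x} (hx : x ∈ Mbar n B I (d + 1)) : pp k n B I d x ∈ Mbar n B I d := by
  have hle : Ideal.map (pp k n B I d).toRingHom
      (Ideal.map (Ideal.Quotient.mk ((originIdeal B I n) ^ (d + 1 + 1))) (originIdeal B I n))
        ≤ Mbar n B I d := by
    rw [Ideal.map_map]
    refine Ideal.map_le_of_le_comap (Ideal.span_le.mpr ?_)
    rintro x ⟨v, rfl⟩
    show pp k n B I d (Ideal.Quotient.mk _ (MvPolynomial.X v)) ∈ Mbar n B I d
    rw [pp_mk]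
    exact X_mem_Mbar n B I d v
  exact hle (Ideal.mem_map_of_mem _ hx)

lemma pp_iot (b : B) : pp k n B I d (iot k n B I (d + 1) b) = iot k n B I d b := by
  rw [iot_apply, pp_mk, iot_apply]

theorem pp_comp_uu (het : Algebra.Etale (MvPolynomial (Fin n) k) B) :
    (pp k n B I d).comp (uu k n B I (d + 1) het) = uu k n B I d het := by
  apply PiTensorProduct.algHom_ext
  intro j
  ext b
  show pp k n B I d (uu k n B I (d + 1) het (PiTensorProduct.singleAlgHom j b))
    = uu k n B I d het (PiTensorProduct.singleAlgHom j b)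
  rw [← incl_single, uu_incl, uu_incl]
  cases j with
  | none => exact pp_iot k n B I d b
  | some i =>
      show pp k n B I d (gg k n B I (d + 1) het i b) = gg k n B I d het i b
      have main : (pp k n B I d).comp (gg k n B I (d + 1) het i) = gg k n B I d het i := by
        refine alg_unique k n B het (tau k n B I d i) (Mbar n B I d) (Mbar_nilp n B I d)
          _ _ ?_ ?_ ?_
        · intro r
          rw [show ((pp k n B I d).comp (gg k n B I (d + 1) het i))
              (algebraMap (MvPolynomial (Fin n) k) B r)
            = pp k n B I d (gg k n B I (d + 1) het i
                (algebraMap (MvPolynomial (Fin n) k) B r)) from rfl]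
          rw [gg_spec1]
          have : (pp k n B I d).comp (tau k n B I (d + 1) i) = tau k n B I d i := by
            apply MvPolynomial.algHom_ext
            intro m
            rw [AlgHom.comp_apply, tau_X, map_add, pp_iot, pp_mk, tau_X]
          exact DFunLike.congr_fun this r
        · exact gg_spec1 k n B I d het i
        · intro b
          have e1 : ((pp k n B I d).comp (gg k n B I (d + 1) het i)) b - gg k n B I d het i b
              = pp k n B I d (gg k n B I (d + 1) het i b - iot k n B I (d + 1) b)
                - (gg k n B I d het i b - iot k n B I d b) := by
            rw [map_sub, pp_iot]
            rw [show ((pp k n B I d).comp (gg k n B I (d + 1) het i)) b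
              = pp k n B I d (gg k n B I (d + 1) het i b) from rfl]
            ring
          rw [e1]
          exact sub_mem (pp_Mbar k n B I d (gg_spec2 k n B I (d + 1) het i b))
            (gg_spec2 k n B I d het i b)
      exact DFunLike.congr_fun main b

end FCAD

namespace FCAD

variable (k : Type) [Field k] (n : ℕ) (B : Type) [CommRing B] [Algebra k B]
variable [Algebra (MvPolynomial (Fin n) k) B] [IsScalarTower k (MvPolynomial (Fin n) k) B]
variable (I I' : Type) [Fintype I] [DecidableEq I] [Fintype I'] [DecidableEq I']
variable (σ : I → I') (d : ℕ)

set_option linter.unusedSectionVars false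
set_option synthInstance.maxHeartbeats 1000000
set_option maxHeartbeats 1600000

lemma rename_ker : ∀ p ∈ (originIdeal B I n) ^ (d + 1),
    (Ideal.Quotient.mkₐ k ((originIdeal B I' n) ^ (d + 1))).comp
      ((MvPolynomial.rename (Prod.map σ id) : MvPolynomial (I × Fin n) B →ₐ[B] _).restrictScalars k) p = 0 := by
  intro p hp
  have h1 : MvPolynomial.rename (Prod.map σ id) p
      ∈ Ideal.map (MvPolynomial.rename (Prod.map σ id) :
          MvPolynomial (I × Fin n) B →ₐ[B] _).toRingHom ((originIdeal B I n) ^ (d + 1)) :=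
    Ideal.mem_map_of_mem _ hp
  rw [Ideal.map_pow] at h1
  have hle : Ideal.map (MvPolynomial.rename (Prod.map σ id) :
      MvPolynomial (I × Fin n) B →ₐ[B] _).toRingHom (originIdeal B I n)
        ≤ originIdeal B I' n := by
    unfold originIdeal
    rw [Ideal.map_span, Ideal.span_le]
    rintro x ⟨y, ⟨v, rfl⟩, rfl⟩
    show (MvPolynomial.rename (Prod.map σ id)) (MvPolynomial.X v : MvPolynomial (I × Fin n) B)
      ∈ _
    rw [MvPolynomial.rename_X]
    exact Ideal.subset_span ⟨Prod.map σ id v, rfl⟩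
  have h2 := Ideal.pow_right_mono hle (d + 1) h1
  exact Ideal.Quotient.eq_zero_iff_mem.mpr h2

/-- The map induced by `σ : I → I'` on the truncated polynomial rings. -/
noncomputable def rr : (MvPolynomial (I × Fin n) B ⧸ (originIdeal B I n) ^ (d + 1)) →ₐ[k]
    (MvPolynomial (I' × Fin n) B ⧸ (originIdeal B I' n) ^ (d + 1)) :=
  Ideal.Quotient.liftₐ _
    ((Ideal.Quotient.mkₐ k ((originIdeal B I' n) ^ (d + 1))).comp
      ((MvPolynomial.rename (Prod.map σ id) : MvPolynomial (I × Fin n) B →ₐ[B] _).restrictScalars k))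
    (rename_ker k n B I I' σ d)

lemma rr_mk (q : MvPolynomial (I × Fin n) B) :
    rr k n B I I' σ d (Ideal.Quotient.mk _ q)
      = Ideal.Quotient.mk _ (MvPolynomial.rename (Prod.map σ id) q) := by
  simp [rr]
  rfl

lemma rr_iot (b : B) : rr k n B I I' σ d (iot k n B I d b) = iot k n B I' d b := by
  rw [iot_apply, rr_mk, iot_apply, MvPolynomial.rename_C]

lemma rr_Mbar {x} (hx : x ∈ Mbar n B I d) : rr k n B I I' σ d x ∈ Mbar n B I' d := by
  have hle : Ideal.map (rr k n B I I' σ d).toRingHom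
      (Ideal.map (Ideal.Quotient.mk ((originIdeal B I n) ^ (d + 1))) (originIdeal B I n))
        ≤ Mbar n B I' d := by
    rw [Ideal.map_map]
    refine Ideal.map_le_of_le_comap (Ideal.span_le.mpr ?_)
    rintro x ⟨v, rfl⟩
    show rr k n B I I' σ d (Ideal.Quotient.mk _ (MvPolynomial.X v)) ∈ Mbar n B I' d
    rw [rr_mk, MvPolynomial.rename_X]
    exact X_mem_Mbar n B I' d (Prod.map σ id v)
  exact hle (Ideal.mem_map_of_mem _ hx)

theorem rr_gg (het : Algebra.Etale (MvPolynomial (Fin n) k) B) (i : I) :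
    (rr k n B I I' σ d).comp (gg k n B I d het i) = gg k n B I' d het (σ i) := by
  refine alg_unique k n B het (tau k n B I' d (σ i)) (Mbar n B I' d) (Mbar_nilp n B I' d)
    _ _ ?_ ?_ ?_
  · intro r
    rw [show ((rr k n B I I' σ d).comp (gg k n B I d het i))
        (algebraMap (MvPolynomial (Fin n) k) B r)
      = rr k n B I I' σ d (gg k n B I d het i (algebraMap (MvPolynomial (Fin n) k) B r)) from rfl]
    rw [gg_spec1]
    have : (rr k n B I I' σ d).comp (tau k n B I d i) = tau k n B I' d (σ i) := by
      apply MvPolynomial.algHom_ext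
      intro m
      rw [AlgHom.comp_apply, tau_X, map_add, rr_iot, rr_mk, MvPolynomial.rename_X, tau_X]
      rfl
    exact DFunLike.congr_fun this r
  · exact gg_spec1 k n B I' d het (σ i)
  · intro b
    have e1 : ((rr k n B I I' σ d).comp (gg k n B I d het i)) b - gg k n B I' d het (σ i) b
        = rr k n B I I' σ d (gg k n B I d het i b - iot k n B I d b)
          - (gg k n B I' d het (σ i) b - iot k n B I' d b) := by
      rw [map_sub, rr_iot]
      rw [show ((rr k n B I I' σ d).comp (gg k n B I d het i)) b
        = rr k n B I I' σ d (gg k n B I d het i b) from rfl]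
      ring
    rw [e1]
    exact sub_mem (rr_Mbar k n B I I' σ d (gg_spec2 k n B I d het i b))
      (gg_spec2 k n B I' d het (σ i) b)

lemma rr_FF (het : Algebra.Etale (MvPolynomial (Fin n) k) B) (i : Option I) (b : B) :
    rr k n B I I' σ d (FF k n B I d het i b) = FF k n B I' d het (Option.map σ i) b := by
  cases i with
  | none => exact rr_iot k n B I I' σ d b
  | some i =>
      show rr k n B I I' σ d (gg k n B I d het i b) = gg k n B I' d het (σ i) b
      exact DFunLike.congr_fun (rr_gg k n B I I' σ d het i) b

end FCAD


/-- Let `Y = Spec B` be a scheme over `k` with an étale morphism to `𝔸^n`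
(an étale `k`-algebra map `k[x_1,…,x_n] → B`).  Then for each finite set `I` the
formal completion of `Y^{{0} ⊔ I}` along the small diagonal `Y` is isomorphic to
`Y × (D^n)^I`, functorially in `I`.  The isomorphism of formal schemes is encoded
as a compatible family of surjective `k`-algebra homomorphisms
`u I d : O(Y^{{0} ⊔ I}) → O(Y × (𝔸^n)^I)/M^{d+1}` with kernel `J^{d+1}` (where `J`
is the diagonal ideal and `M` the ideal of the origin), compatible with the change
of level `d` and, on the generators of the tensor product, with the maps induced by
any map of finite sets `σ : I → I'`. -/
theorem formal_completion_along_diagonal_iso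
    (k : Type) [Field k] (n : ℕ) (B : Type) [CommRing B] [Algebra k B]
    [Algebra (MvPolynomial (Fin n) k) B] [IsScalarTower k (MvPolynomial (Fin n) k) B]
    (hetale : Algebra.Etale (MvPolynomial (Fin n) k) B) :
    ∃ u : ∀ (I : Type) [Fintype I] [DecidableEq I] (d : ℕ),
        (PiTensorProduct k fun _ : Option I => B) →ₐ[k]
          (MvPolynomial (I × Fin n) B ⧸ (originIdeal B I n) ^ (d + 1)),
      (∀ (I : Type) [Fintype I] [DecidableEq I] (d : ℕ),
        Function.Surjective (u I d)) ∧
      (∀ (I : Type) [Fintype I] [DecidableEq I] (d : ℕ)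
        (t : PiTensorProduct k fun _ : Option I => B),
        u I d t = 0 ↔ t ∈ (diagIdeal k B I) ^ (d + 1)) ∧
      (∀ (I : Type) [Fintype I] [DecidableEq I] (d : ℕ)
        (t : PiTensorProduct k fun _ : Option I => B) (q : MvPolynomial (I × Fin n) B),
        u I (d + 1) t = Ideal.Quotient.mk ((originIdeal B I n) ^ (d + 1 + 1)) q →
          u I d t = Ideal.Quotient.mk ((originIdeal B I n) ^ (d + 1)) q) ∧
      (∀ (I I' : Type) [Fintype I] [DecidableEq I] [Fintype I'] [DecidableEq I']
        (σ : I → I') (d : ℕ) (i : Option I) (b : B) (q : MvPolynomial (I × Fin n) B),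
        u I d (inclFactor k B i b) = Ideal.Quotient.mk ((originIdeal B I n) ^ (d + 1)) q →
          u I' d (inclFactor k B (Option.map σ i) b)
            = Ideal.Quotient.mk ((originIdeal B I' n) ^ (d + 1))
                (MvPolynomial.rename (Prod.map σ id) q)) := by
  refine ⟨fun I _ _ d => FCAD.uu k n B I d hetale, ?_, ?_, ?_, ?_⟩
  · intro I _ _ d
    exact FCAD.uu_surjective k n B I d hetale
  · intro I _ _ d t
    exact FCAD.uu_ker_iff k n B I d hetale t
  · intro I _ _ d t q h
    have key := DFunLike.congr_fun (FCAD.pp_comp_uu k n B I d hetale) t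
    rw [show ((FCAD.pp k n B I d).comp (FCAD.uu k n B I (d + 1) hetale)) t
        = FCAD.pp k n B I d (FCAD.uu k n B I (d + 1) hetale t) from rfl, h,
      FCAD.pp_mk] at key
    exact key.symm
  · intro I I' _ _ _ _ σ d i b q h
    rw [FCAD.uu_incl] at h
    rw [FCAD.uu_incl, ← FCAD.rr_FF k n B I I' σ d hetale i b, h, FCAD.rr_mk]
end
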